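/- Let A_1, A_2 be binary random variables and B_1, B_2 discrete random variables whose joint distribution has the form P(A_1=a_1, A_2=a_2, B_1=b_1, B_2=b_2) = (1/4)·Q(b_1 | a_1 + a_2)·Q(b_2 | a_2) for some conditional probability kernel Q from F_2 to a finite set (the addition a_1 + a_2 over F_2). Then for every a > 0 there exists b > 0 such that H(A_2|B_2) − H(A_2 | B_1, B_2, A_1) ≤ b implies H(A_2|B_2) ∈ [0, a] ∪ [1−a, 1]. -/

import Mathlib

open MeasureTheory ProbabilityTheory Filter
open scoped Classical

/-- Shannon entropy (in bits) of a finite-valued random variable `X` on `(Ω, μ)`: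
`H(X) = ∑ₓ P(X = x) log₂ (1 / P(X = x))`. -/
noncomputable def shEnt {Ω : Type*} [MeasurableSpace Ω] (μ : Measure Ω)
    {α : Type*} [Fintype α] (X : Ω → α) : ℝ :=
  (∑ x : α, Real.negMulLog ((μ (X ⁻¹' {x})).toReal)) / Real.log 2

/-- Conditional Shannon entropy (in bits) of discrete random variables:
`H(X | Y) = H(X, Y) - H(Y)`. -/
noncomputable def cEnt {Ω : Type*} [MeasurableSpace Ω] (μ : Measure Ω)
    {α β : Type*} [Fintype α] [Fintype β] (X : Ω → α) (Y : Ω → β) : ℝ :=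
  shEnt μ (fun ω => (X ω, Y ω)) - shEnt μ Y

/-- Shannon entropy (in bits) of a distribution on a finite set. -/
noncomputable def distEnt {α : Type*} [MeasurableSpace α] [Fintype α] (ν : Measure α) : ℝ :=
  (∑ x : α, Real.negMulLog ((ν {x}).toReal)) / Real.log 2

/-- The binary entropy function `h(p) = -p log₂ p - (1-p) log₂ (1-p)`. -/
noncomputable def binEnt (p : ℝ) : ℝ :=
  (Real.negMulLog p + Real.negMulLog (1 - p)) / Real.log 2

/-- The Bernoulli(p) distribution on `F₂` (probability `p` of the outcome `1`). -/
noncomputable def bern (p : ℝ) : Measure (ZMod 2) :=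
  ENNReal.ofReal (1 - p) • Measure.dirac 0 + ENNReal.ofReal p • Measure.dirac 1

/-- `G k` is the `2^k × 2^k` matrix over `F₂` given by the `k`-fold Kronecker power of
`[[1,0],[1,1]]`, in closed form: the `(i,j)` entry is `1` iff each binary digit of `j`
is dominated by the corresponding binary digit of `i` (for the single factor
`[[1,0],[1,1]]`, the `(a,b)` entry is `1` iff the bit `b` is dominated by the bit `a`,
and the Kronecker power multiplies these bitwise conditions). -/
def G (k : ℕ) : Matrix (Fin (2 ^ k)) (Fin (2 ^ k)) (ZMod 2) :=
  Matrix.of fun i j => if j.val &&& i.val = j.val then 1 else 0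

open scoped ENNReal

namespace S16

lemma log2_pos : (0:ℝ) < Real.log 2 := Real.log_pos (by norm_num)

lemma entsum_nonneg {p : ℝ} (h0 : 0 ≤ p) (h1 : p ≤ 1) :
    0 ≤ Real.negMulLog p + Real.negMulLog (1 - p) :=
  add_nonneg (Real.negMulLog_nonneg h0 h1)
    (Real.negMulLog_nonneg (by linarith) (by linarith))

lemma binEnt_nonneg {p : ℝ} (h0 : 0 ≤ p) (h1 : p ≤ 1) : 0 ≤ binEnt p :=
  div_nonneg (entsum_nonneg h0 h1) log2_pos.le

lemma entsum_le_log2 {p : ℝ} (h0 : 0 ≤ p) (h1 : p ≤ 1) :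
    Real.negMulLog p + Real.negMulLog (1 - p) ≤ Real.log 2 := by
  rcases eq_or_lt_of_le h0 with h | hp
  · simp [← h, Real.negMulLog]
    exact log2_pos.le
  rcases eq_or_lt_of_le h1 with h | hp1
  · simp [h, Real.negMulLog]
    exact log2_pos.le
  have h1' : Real.log ((2*p)⁻¹) ≤ (2*p)⁻¹ - 1 :=
    Real.log_le_sub_one_of_pos (by positivity)
  rw [Real.log_inv, Real.log_mul two_ne_zero (ne_of_gt hp)] at h1'
  have hop : (0:ℝ) < 1 - p := by linarith
  have h2' : Real.log ((2*(1-p))⁻¹) ≤ (2*(1-p))⁻¹ - 1 :=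
    Real.log_le_sub_one_of_pos (by positivity)
  rw [Real.log_inv, Real.log_mul two_ne_zero (by linarith : (1:ℝ) - p ≠ 0)] at h2'
  have m1 := mul_le_mul_of_nonneg_left h1' h0
  have m2 := mul_le_mul_of_nonneg_left h2' (by linarith : (0:ℝ) ≤ 1 - p)
  have e1 : p * (2*p)⁻¹ = 1/2 := by field_simp
  have e2 : (1-p) * (2*(1-p))⁻¹ = 1/2 := by
    field_simp
  simp only [Real.negMulLog]
  nlinarith [m1, m2, e1, e2]

lemma binEnt_le_one {p : ℝ} (h0 : 0 ≤ p) (h1 : p ≤ 1) : binEnt p ≤ 1 := by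
  rw [binEnt, div_le_one log2_pos]
  exact entsum_le_log2 h0 h1

/-- reverse Pinsker: `log 2 * (1 - binEnt p) ≤ (1-2p)^2`. -/
lemma rev_pinsker {p : ℝ} (h0 : 0 ≤ p) (h1 : p ≤ 1) :
    Real.log 2 * (1 - binEnt p) ≤ (1 - 2*p)^2 := by
  have hE : Real.log 2 * binEnt p = Real.negMulLog p + Real.negMulLog (1-p) := by
    rw [binEnt]; field_simp
  have key : Real.log 2 - (Real.negMulLog p + Real.negMulLog (1-p)) ≤ (1-2*p)^2 := by
    rcases eq_or_lt_of_le h0 with h | hp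
    · simp [← h, Real.negMulLog]
      nlinarith [Real.log_le_sub_one_of_pos (by norm_num : (0:ℝ) < 2)]
    rcases eq_or_lt_of_le h1 with h | hp1
    · simp [h, Real.negMulLog]
      nlinarith [Real.log_le_sub_one_of_pos (by norm_num : (0:ℝ) < 2)]
    have h1' : Real.log (2*p) ≤ 2*p - 1 := Real.log_le_sub_one_of_pos (by positivity)
    have hop : (0:ℝ) < 1 - p := by linarith
    have h2' : Real.log (2*(1-p)) ≤ 2*(1-p) - 1 := Real.log_le_sub_one_of_pos (by positivity)
    rw [Real.log_mul two_ne_zero (ne_of_gt hp)] at h1'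
    rw [Real.log_mul two_ne_zero (by linarith : (1:ℝ) - p ≠ 0)] at h2'
    have m1 := mul_le_mul_of_nonneg_left h1' h0
    have m2 := mul_le_mul_of_nonneg_left h2' (by linarith : (0:ℝ) ≤ 1 - p)
    simp only [Real.negMulLog]
    nlinarith [m1, m2]
  nlinarith [hE, key]

lemma nml_le_two_sqrt {p : ℝ} (h0 : 0 ≤ p) : Real.negMulLog p ≤ 2 * Real.sqrt p := by
  rcases eq_or_lt_of_le h0 with h | hp
  · simp [← h]
  have hs : 0 < Real.sqrt p := Real.sqrt_pos.2 hp
  have h1 : Real.log ((Real.sqrt p)⁻¹) ≤ (Real.sqrt p)⁻¹ - 1 :=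
    Real.log_le_sub_one_of_pos (by positivity)
  rw [Real.log_inv] at h1
  have hlog : Real.log (Real.sqrt p) = Real.log p / 2 := Real.log_sqrt h0
  rw [hlog] at h1
  -- -log p / 2 ≤ 1/√p - 1
  have m := mul_le_mul_of_nonneg_left h1 h0
  have e : p * (Real.sqrt p)⁻¹ = Real.sqrt p := by
    rw [← Real.sqrt_mul_self h0]
    field_simp
    rw [Real.sq_sqrt (Real.sqrt_nonneg _)]
  rw [Real.negMulLog]
  nlinarith [m, e, hs, Real.sqrt_nonneg p, h0]

lemma nml_one_sub_le {p : ℝ} (h0 : 0 ≤ p) (h1 : p ≤ 1) : Real.negMulLog (1 - p) ≤ p := by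
  rcases eq_or_lt_of_le h1 with h | hp1
  · simp [h]
  have hop : (0:ℝ) < 1 - p := by linarith
  have h1' : Real.log ((1-p)⁻¹) ≤ (1-p)⁻¹ - 1 := Real.log_le_sub_one_of_pos (by positivity)
  rw [Real.log_inv] at h1'
  have m := mul_le_mul_of_nonneg_left h1' (by linarith : (0:ℝ) ≤ 1 - p)
  have e : (1-p) * (1-p)⁻¹ = 1 := mul_inv_cancel₀ (ne_of_gt hop)
  rw [Real.negMulLog]
  nlinarith [m, e]

/-- `(log 2 * binEnt p)^4 ≤ 81 * (p*(1-p))`. -/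
lemma entsum_pow_four {p : ℝ} (h0 : 0 ≤ p) (h1 : p ≤ 1) :
    (Real.log 2 * binEnt p)^4 ≤ 81 * (p * (1-p)) := by
  have hE : Real.log 2 * binEnt p = Real.negMulLog p + Real.negMulLog (1-p) := by
    rw [binEnt]; field_simp
  rw [hE]
  set n1 := Real.negMulLog p
  set n2 := Real.negMulLog (1-p)
  have hn1 : 0 ≤ n1 := Real.negMulLog_nonneg h0 h1
  have hn2 : 0 ≤ n2 := Real.negMulLog_nonneg (by linarith) (by linarith)
  have b1 : n1 ≤ 2 * Real.sqrt p := nml_le_two_sqrt h0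
  have b2 : n2 ≤ p := nml_one_sub_le h0 h1
  have b3 : n2 ≤ 2 * Real.sqrt (1-p) := by
    have := nml_le_two_sqrt (p := 1-p) (by linarith)
    exact this
  have b4 : n1 ≤ 1 - p := by
    have := nml_one_sub_le (p := 1-p) (by linarith) (by linarith)
    simpa using this
  have hsp : (Real.sqrt p)^2 = p := Real.sq_sqrt h0
  have hsp' : (Real.sqrt (1-p))^2 = 1-p := Real.sq_sqrt (by linarith)
  have hpn : 0 ≤ Real.sqrt p := Real.sqrt_nonneg _
  have hpn' : 0 ≤ Real.sqrt (1-p) := Real.sqrt_nonneg _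
  -- (n1+n2)^2 ≤ 9p and ≤ 9(1-p)
  have c1 : (n1+n2)^2 ≤ 9 * p := by nlinarith [b1, b2, hsp, hpn, sq_nonneg (Real.sqrt p - 1)]
  have c2 : (n1+n2)^2 ≤ 9 * (1-p) := by
    nlinarith [b3, b4, hsp', hpn', sq_nonneg (Real.sqrt (1-p) - 1)]
  calc (n1+n2)^4 = (n1+n2)^2 * (n1+n2)^2 := by ring
  _ ≤ (9*p) * (9*(1-p)) := by
      apply mul_le_mul c1 c2 (sq_nonneg _) (by nlinarith [sq_nonneg (n1+n2)])
  _ = 81 * (p * (1-p)) := by ring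


lemma mul_log_sub_ge (x q : ℝ) (hx : 0 ≤ x) (hq : 0 < q) :
    2 * x - 2 * Real.sqrt x * Real.sqrt q ≤ x * (Real.log x - Real.log q) := by
  rcases eq_or_lt_of_le hx with h | hxpos
  · simp [← h]
  · have hu : 0 < Real.sqrt x := Real.sqrt_pos.2 hxpos
    have hv : 0 < Real.sqrt q := Real.sqrt_pos.2 hq
    have h2 := Real.log_le_sub_one_of_pos (x := Real.sqrt q / Real.sqrt x) (by positivity)
    have h3 : Real.log (Real.sqrt q / Real.sqrt x)
        = Real.log q / 2 - Real.log x / 2 := by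
      rw [Real.log_div (ne_of_gt hv) (ne_of_gt hu), Real.log_sqrt hq.le,
        Real.log_sqrt hxpos.le]
    rw [h3] at h2
    have h4 : x * (Real.log x - Real.log q) ≥ x * (2 - 2 * (Real.sqrt q / Real.sqrt x)) := by
      have := mul_le_mul_of_nonneg_left
        (a := x) (by linarith : 2 - 2 * (Real.sqrt q / Real.sqrt x) ≤ Real.log x - Real.log q) hx
      linarith
    have hxx : Real.sqrt x * Real.sqrt x = x := Real.mul_self_sqrt hx
    have h5 : x * (2 - 2 * (Real.sqrt q / Real.sqrt x)) = 2*x - 2 * Real.sqrt x * Real.sqrt q := by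
      field_simp
      nlinarith [hxx]
    linarith [h4, h5.symm.le]

lemma quadkey (u v u' v' : ℝ) (hun : 0 ≤ u) (hvn : 0 ≤ v) (hun' : 0 ≤ u') (hvn' : 0 ≤ v')
    (hu' : u'^2 = 1 - u^2) (hv' : v'^2 = 1 - v^2) :
    (u^2 - v^2)^2 ≤ (2 * u^2 - 2*u*v) + (2 * (1-u^2) - 2*u'*v') := by
  have h3 : u^2 - v^2 = (u*v'-u'*v)*(u*v'+u'*v) := by linear_combination v^2*hu' - u^2*hv'
  have h2 : (u*v+u'*v')^2 = 1 - (u*v'-u'*v)^2 := by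
    linear_combination (v^2 + v'^2)*hu' + hv'
  have hB : (u*v'+u'*v)^2 = 1 - (u*v-u'*v')^2 := by
    linear_combination (v^2 + v'^2)*hu' + hv'
  have hF : 0 ≤ u*v + u'*v' := by positivity
  rw [h3]
  nlinarith [sq_nonneg (u*v-u'*v'), sq_nonneg (u*v+u'*v'-1), sq_nonneg (u*v'-u'*v),
    mul_nonneg (sq_nonneg (u*v'-u'*v)) (sq_nonneg (u*v-u'*v'))]

/-- binary Pinsker with constant 1. -/
lemma klB_ge (x q : ℝ) (hx0 : 0 ≤ x) (hx1 : x ≤ 1) (hq0 : 0 < q) (hq1 : q < 1) :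
    (x - q)^2 ≤ x * Real.log x + (1-x) * Real.log (1-x)
      - x * Real.log q - (1-x) * Real.log (1-q) := by
  have t1 := mul_log_sub_ge x q hx0 hq0
  have t2 := mul_log_sub_ge (1-x) (1-q) (by linarith) (by linarith)
  have hu : (Real.sqrt x)^2 = x := Real.sq_sqrt hx0
  have hv : (Real.sqrt q)^2 = q := Real.sq_sqrt hq0.le
  have hu' : (Real.sqrt (1-x))^2 = 1 - x := Real.sq_sqrt (by linarith)
  have hv' : (Real.sqrt (1-q))^2 = 1 - q := Real.sq_sqrt (by linarith)
  have key := quadkey (Real.sqrt x) (Real.sqrt q) (Real.sqrt (1-x)) (Real.sqrt (1-q))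
    (Real.sqrt_nonneg _) (Real.sqrt_nonneg _) (Real.sqrt_nonneg _) (Real.sqrt_nonneg _)
    (by rw [hu, hu']) (by rw [hv, hv'])
  rw [hu] at key
  nlinarith [t1, t2, key]

/-- chord identity for binary entropy. -/
lemma chord (x q : ℝ) (hq0 : 0 < q) (hq1 : q < 1) :
    binEnt x = binEnt q + ((Real.log (1-q) - Real.log q)/Real.log 2) * (x - q)
      - (x * Real.log x + (1-x) * Real.log (1-x)
          - x * Real.log q - (1-x) * Real.log (1-q)) / Real.log 2 := by
  simp only [binEnt, Real.negMulLog]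
  field_simp
  ring

/-- Jensen gap for `binEnt` with Pinsker defect. -/
lemma jensen_gap {ι : Type*} (s : Finset ι) (lam z : ι → ℝ) (q : ℝ)
    (hlam : ∀ i ∈ s, 0 ≤ lam i) (hz0 : ∀ i ∈ s, 0 ≤ z i) (hz1 : ∀ i ∈ s, z i ≤ 1)
    (hq0 : 0 < q) (hq1 : q < 1)
    (hmean : ∑ i ∈ s, lam i * z i = q * ∑ i ∈ s, lam i) :
    ∑ i ∈ s, lam i * binEnt (z i)
      ≤ (∑ i ∈ s, lam i) * binEnt q - (∑ i ∈ s, lam i * (z i - q)^2) / Real.log 2 := by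
  set c := (Real.log (1-q) - Real.log q)/Real.log 2 with hc
  have per : ∀ i ∈ s, lam i * binEnt (z i)
      ≤ lam i * binEnt q + (lam i * (z i - q)) * c - lam i * ((z i - q)^2 / Real.log 2) := by
    intro i hi
    have hch := chord (z i) q hq0 hq1
    have hkl := klB_ge (z i) q (hz0 i hi) (hz1 i hi) hq0 hq1
    have hdiv := (div_le_div_iff_of_pos_right log2_pos).mpr hkl
    have hb : binEnt (z i) ≤ binEnt q + c * (z i - q) - (z i - q)^2 / Real.log 2 := by
      rw [hch]; linarith [hdiv]
    have := mul_le_mul_of_nonneg_left hb (hlam i hi)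
    refine le_trans this (le_of_eq (by ring))
  have step := Finset.sum_le_sum per
  have e1 : ∑ i ∈ s, (lam i * binEnt q + (lam i * (z i - q)) * c - lam i * ((z i - q)^2 / Real.log 2))
      = (∑ i ∈ s, lam i) * binEnt q + (∑ i ∈ s, lam i * (z i - q)) * c
        - (∑ i ∈ s, lam i * (z i - q)^2) / Real.log 2 := by
    have hterm : ∀ i ∈ s, lam i * ((z i - q)^2 / Real.log 2) = (lam i * (z i - q)^2) / Real.log 2 := by
      intro i _; ring
    rw [Finset.sum_sub_distrib, Finset.sum_add_distrib, ← Finset.sum_mul, ← Finset.sum_mul,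
      Finset.sum_congr rfl hterm, ← Finset.sum_div]
  have e2 : ∑ i ∈ s, lam i * (z i - q) = 0 := by
    have : ∑ i ∈ s, lam i * (z i - q) = (∑ i ∈ s, lam i * z i) - q * ∑ i ∈ s, lam i := by
      rw [Finset.mul_sum]
      rw [← Finset.sum_sub_distrib]
      apply Finset.sum_congr rfl
      intro i _
      ring
    rw [this, hmean]
    ring
  rw [e1, e2] at step
  linarith [step]


/-- master measure lemma: outer measure of preimage of any finite set of atoms
is the sum of the atom probabilities. -/
lemma measure_pre {Ω ι : Type*} [MeasurableSpace Ω] [Fintype ι]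
    (μ : Measure Ω) [IsProbabilityMeasure μ] (Φ : Ω → ι) (r : ι → ℝ)
    (hr : ∀ i, 0 ≤ r i) (hsum : ∑ i, r i = 1)
    (h : ∀ i, (μ (Φ ⁻¹' {i})).toReal = r i) (S : Finset ι) :
    (μ (Φ ⁻¹' ↑S)).toReal = ∑ i ∈ S, r i := by
  have hofr : ∀ i, μ (Φ ⁻¹' {i}) = ENNReal.ofReal (r i) := by
    intro i
    have hne : μ (Φ ⁻¹' {i}) ≠ ⊤ := measure_ne_top μ _
    rw [← h i, ENNReal.ofReal_toReal hne]
  have upper : ∀ T : Finset ι, μ (Φ ⁻¹' ↑T) ≤ ∑ i ∈ T, ENNReal.ofReal (r i) := by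
    intro T
    have hcover : Φ ⁻¹' ↑T = ⋃ i ∈ T, Φ ⁻¹' {i} := by
      ext ω; simp
    calc μ (Φ ⁻¹' ↑T) = μ (⋃ i ∈ T, Φ ⁻¹' {i}) := by rw [hcover]
    _ ≤ ∑ i ∈ T, μ (Φ ⁻¹' {i}) := measure_biUnion_finset_le T _
    _ = ∑ i ∈ T, ENNReal.ofReal (r i) := Finset.sum_congr rfl fun i _ => hofr i
  have htot : ∑ i : ι, ENNReal.ofReal (r i) = 1 := by
    rw [← ENNReal.ofReal_sum_of_nonneg (fun i _ => hr i), hsum, ENNReal.ofReal_one]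
  have hunion : (Φ ⁻¹' ↑S) ∪ (Φ ⁻¹' ↑Sᶜ) = Set.univ := by
    ext ω; by_cases hω : Φ ω ∈ S <;> simp [hω]
  have hlow : ∑ i ∈ S, ENNReal.ofReal (r i) ≤ μ (Φ ⁻¹' ↑S) := by
    have h1 : (1:ℝ≥0∞) ≤ μ (Φ ⁻¹' ↑S) + μ (Φ ⁻¹' ↑Sᶜ) := by
      have := measure_union_le (μ := μ) (Φ ⁻¹' ↑S) (Φ ⁻¹' ↑Sᶜ)
      rw [hunion] at this
      simpa using this
    have h2 : μ (Φ ⁻¹' ↑Sᶜ) ≤ ∑ i ∈ Sᶜ, ENNReal.ofReal (r i) := upper Sᶜ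
    have h3 : ∑ i ∈ S, ENNReal.ofReal (r i) + ∑ i ∈ Sᶜ, ENNReal.ofReal (r i) = 1 := by
      rw [Finset.sum_add_sum_compl, htot]
    have hc : ∑ i ∈ Sᶜ, ENNReal.ofReal (r i) ≠ ⊤ :=
      ne_top_of_le_ne_top ENNReal.one_ne_top (by rw [← h3]; exact le_add_self)
    -- from h1, h2, h3
    have h4 : ∑ i ∈ S, ENNReal.ofReal (r i) + ∑ i ∈ Sᶜ, ENNReal.ofReal (r i)
        ≤ μ (Φ ⁻¹' ↑S) + ∑ i ∈ Sᶜ, ENNReal.ofReal (r i) := by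
      rw [h3]
      exact h1.trans (add_le_add_right h2 _)
    exact (ENNReal.add_le_add_iff_right hc).mp h4
  have heq : μ (Φ ⁻¹' ↑S) = ∑ i ∈ S, ENNReal.ofReal (r i) := le_antisymm (upper S) hlow
  rw [heq]
  rw [← ENNReal.ofReal_sum_of_nonneg (fun i _ => hr i)]
  exact ENNReal.toReal_ofReal (Finset.sum_nonneg (fun i _ => hr i))


lemma sum_zmod2 {M : Type*} [AddCommMonoid M] (f : ZMod 2 → M) :
    ∑ x : ZMod 2, f x = f 0 + f 1 := by
  rw [show (Finset.univ : Finset (ZMod 2)) = {0, 1} from by decide]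
  rw [Finset.sum_insert (by decide), Finset.sum_singleton]

lemma pair_nml (u v : ℝ) (hu : 0 ≤ u) (hv : 0 ≤ v) :
    Real.negMulLog u + Real.negMulLog v - Real.negMulLog (u+v)
      = (u+v) * ((Real.negMulLog (if u+v = 0 then 0 else v/(u+v)))
          + Real.negMulLog (1 - (if u+v = 0 then 0 else v/(u+v)))) := by
  rcases eq_or_lt_of_le (add_nonneg hu hv) with h | hs
  · have hu0 : u = 0 := by linarith
    have hv0 : v = 0 := by linarith
    simp [hu0, hv0]
  · rw [if_neg (ne_of_gt hs)]
    have h1 : 1 - v/(u+v) = u/(u+v) := by field_simp; ring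
    rw [h1]
    rcases eq_or_lt_of_le hu with h | hu'
    · have e1 : v/(u+v) = 1 := by
        rw [← h, zero_add]; exact div_self (by linarith)
      have e2 : u/(u+v) = 0 := by rw [← h, zero_div]
      rw [e1, e2, ← h]
      simp [Real.negMulLog]
    rcases eq_or_lt_of_le hv with h | hv'
    · have e1 : v/(u+v) = 0 := by rw [← h, zero_div]
      have e2 : u/(u+v) = 1 := by
        rw [← h, add_zero]; exact div_self (by linarith)
      rw [e1, e2, ← h]
      simp [Real.negMulLog]
    simp only [Real.negMulLog]
    rw [Real.log_div (ne_of_gt hv') (ne_of_gt hs), Real.log_div (ne_of_gt hu') (ne_of_gt hs)]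
    field_simp
    ring

lemma cEnt_formula {Ω β : Type*} [MeasurableSpace Ω] [Fintype β]
    (μ : Measure Ω) (X : Ω → ZMod 2) (Y : Ω → β) (m : ZMod 2 → β → ℝ)
    (hm : ∀ x i, 0 ≤ m x i)
    (hjoint : ∀ x i, (μ ((fun ω => (X ω, Y ω)) ⁻¹' {(x,i)})).toReal = m x i)
    (hmarg : ∀ i, (μ (Y ⁻¹' {i})).toReal = m 0 i + m 1 i) :
    cEnt μ X Y = ∑ i, (m 0 i + m 1 i) *
      binEnt (if m 0 i + m 1 i = 0 then 0 else m 1 i / (m 0 i + m 1 i)) := by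
  unfold cEnt shEnt
  have e1 : ∑ z : ZMod 2 × β, Real.negMulLog ((μ ((fun ω => (X ω, Y ω)) ⁻¹' {z})).toReal)
      = ∑ i : β, (Real.negMulLog (m 0 i) + Real.negMulLog (m 1 i)) := by
    rw [Fintype.sum_prod_type]
    rw [sum_zmod2 (fun x => ∑ i : β, Real.negMulLog ((μ ((fun ω => (X ω, Y ω)) ⁻¹' {(x, i)})).toReal))]
    rw [← Finset.sum_add_distrib]
    apply Finset.sum_congr rfl
    intro i _
    rw [hjoint 0 i, hjoint 1 i]
  have e2 : ∑ i : β, Real.negMulLog ((μ (Y ⁻¹' {i})).toReal)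
      = ∑ i : β, Real.negMulLog (m 0 i + m 1 i) := by
    apply Finset.sum_congr rfl
    intro i _
    rw [hmarg i]
  rw [e1, e2, div_sub_div_same, ← Finset.sum_sub_distrib]
  rw [Finset.sum_div]
  apply Finset.sum_congr rfl
  intro i _
  rw [pair_nml (m 0 i) (m 1 i) (hm 0 i) (hm 1 i), binEnt, mul_div_assoc]


/-- weighted Cauchy–Schwarz / Jensen for squares. -/
lemma ECS {ι : Type*} (s : Finset ι) (w f : ι → ℝ) (hw : ∀ i ∈ s, 0 ≤ w i)
    (hws : ∑ i ∈ s, w i = 1) :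
    (∑ i ∈ s, w i * f i)^2 ≤ ∑ i ∈ s, w i * (f i)^2 := by
  have h := Finset.sum_mul_sq_le_sq_mul_sq s (fun i => Real.sqrt (w i))
    (fun i => Real.sqrt (w i) * f i)
  have e1 : ∀ i ∈ s, Real.sqrt (w i) * (Real.sqrt (w i) * f i) = w i * f i := by
    intro i hi
    rw [← mul_assoc, Real.mul_self_sqrt (hw i hi)]
  have e2 : ∀ i ∈ s, Real.sqrt (w i) ^ 2 = w i := fun i hi => Real.sq_sqrt (hw i hi)
  have e3 : ∀ i ∈ s, (Real.sqrt (w i) * f i) ^ 2 = w i * (f i)^2 := by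
    intro i hi
    rw [mul_pow, Real.sq_sqrt (hw i hi)]
  rw [Finset.sum_congr rfl e1, Finset.sum_congr rfl e2, Finset.sum_congr rfl e3, hws,
    one_mul] at h
  exact h

/-- iterated: `(∑ w f)^8 ≤ ∑ w f^8`. -/
lemma ECS8 {ι : Type*} (s : Finset ι) (w f : ι → ℝ) (hw : ∀ i ∈ s, 0 ≤ w i)
    (hws : ∑ i ∈ s, w i = 1) (hf : ∀ i ∈ s, 0 ≤ f i) :
    (∑ i ∈ s, w i * f i)^8 ≤ ∑ i ∈ s, w i * (f i)^8 := by
  have h2 := ECS s w f hw hws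
  have h4 := ECS s w (fun i => (f i)^2) hw hws
  have h8 := ECS s w (fun i => ((f i)^2)^2) hw hws
  have n1 : 0 ≤ ∑ i ∈ s, w i * f i :=
    Finset.sum_nonneg fun i hi => mul_nonneg (hw i hi) (hf i hi)
  have n2 : 0 ≤ ∑ i ∈ s, w i * (f i)^2 :=
    Finset.sum_nonneg fun i hi => mul_nonneg (hw i hi) (sq_nonneg _)
  have n4 : 0 ≤ ∑ i ∈ s, w i * ((f i)^2)^2 :=
    Finset.sum_nonneg fun i hi => mul_nonneg (hw i hi) (sq_nonneg _)
  have e8 : ∑ i ∈ s, w i * (((f i)^2)^2)^2 = ∑ i ∈ s, w i * (f i)^8 := by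
    apply Finset.sum_congr rfl; intro i _; ring
  calc (∑ i ∈ s, w i * f i)^8 = (((∑ i ∈ s, w i * f i)^2)^2)^2 := by ring
  _ ≤ ((∑ i ∈ s, w i * (f i)^2)^2)^2 := by
      apply pow_le_pow_left₀ (sq_nonneg _)
      apply pow_le_pow_left₀ (sq_nonneg _) h2
  _ ≤ (∑ i ∈ s, w i * ((f i)^2)^2)^2 := by
      apply pow_le_pow_left₀ (by positivity) h4
  _ ≤ ∑ i ∈ s, w i * (((f i)^2)^2)^2 := h8
  _ = ∑ i ∈ s, w i * (f i)^8 := e8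

/-- the core per-atom quadratic bound. -/
lemma PI_core (α β w p : ℝ) (hα : 0 ≤ α) (hβ : 0 ≤ β) (hw : 0 < w) (hp0 : 0 < p) (hp1 : p < 1)
    (hD : 0 < (1-p)*α + p*β) :
    w/2 * (p*(1-p))^2 * ((β-α)^2/(α+β)) ≤
      (w/2*((1-p)*α + p*β)) * (p*β/((1-p)*α + p*β) - p)^2 := by
  set D := (1-p)*α + p*β with hDdef
  have hab : 0 < α + β := by nlinarith
  have hle : D ≤ α + β := by nlinarith
  have e : (w/2*D) * (p*β/D - p)^2 = w/2 * (p*(1-p))^2 * ((β-α)^2/D) := by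
    have hD' : D ≠ 0 := ne_of_gt hD
    field_simp
    ring
  rw [e]
  have hdiv : (β-α)^2/(α+β) ≤ (β-α)^2/D := by
    apply div_le_div_of_nonneg_left (sq_nonneg _) hD hle
  have hcoef : 0 ≤ w/2 * (p*(1-p))^2 := by positivity
  exact mul_le_mul_of_nonneg_left hdiv hcoef


lemma binEnt_zero : binEnt 0 = 0 := by simp [binEnt]
lemma binEnt_one : binEnt 1 = 0 := by simp [binEnt]

lemma zmod2_cases (c : ZMod 2) : c = 0 ∨ c = 1 := by revert c; decide

variable {γ : Type*} [Fintype γ]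

noncomputable def wv (Q : ZMod 2 → γ → ℝ) (y : γ) : ℝ := 1/2 * Q 0 y + 1/2 * Q 1 y
noncomputable def pv (Q : ZMod 2 → γ → ℝ) (y : γ) : ℝ :=
  if wv Q y = 0 then 0 else (1/2 * Q 1 y) / wv Q y
noncomputable def sT (Q : ZMod 2 → γ → ℝ) (i : γ × γ × ZMod 2) : ℝ :=
  1/4 * Q i.2.2 i.1 * Q 0 i.2.1 + 1/4 * Q (i.2.2 + 1) i.1 * Q 1 i.2.1
noncomputable def qT (Q : ZMod 2 → γ → ℝ) (i : γ × γ × ZMod 2) : ℝ :=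
  if sT Q i = 0 then 0 else (1/4 * Q (i.2.2 + 1) i.1 * Q 1 i.2.1) / sT Q i
noncomputable def JJ (Q : ZMod 2 → γ → ℝ) : ℝ :=
  ∑ b1 : γ, (if Q 0 b1 + Q 1 b1 = 0 then 0 else (Q 1 b1 - Q 0 b1)^2/(Q 0 b1 + Q 1 b1))
noncomputable def HHQ (Q : ZMod 2 → γ → ℝ) : ℝ := ∑ y : γ, wv Q y * binEnt (pv Q y)
noncomputable def HPQ (Q : ZMod 2 → γ → ℝ) : ℝ := ∑ i : γ × γ × ZMod 2, sT Q i * binEnt (qT Q i)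

variable (Q : ZMod 2 → γ → ℝ)

lemma wv_nonneg (hQ0 : ∀ x y, 0 ≤ Q x y) (y : γ) : 0 ≤ wv Q y := by
  have h0 := hQ0 0 y; have h1 := hQ0 1 y; unfold wv; linarith

lemma pv_nonneg (hQ0 : ∀ x y, 0 ≤ Q x y) (y : γ) : 0 ≤ pv Q y := by
  unfold pv
  split
  · exact le_refl 0
  · rename_i h
    have hw : 0 < wv Q y := lt_of_le_of_ne (wv_nonneg Q hQ0 y) (Ne.symm h)
    exact div_nonneg (by linarith [hQ0 1 y]) hw.le

lemma pv_le_one (hQ0 : ∀ x y, 0 ≤ Q x y) (y : γ) : pv Q y ≤ 1 := by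
  unfold pv
  split
  · norm_num
  · rename_i h
    have hw : 0 < wv Q y := lt_of_le_of_ne (wv_nonneg Q hQ0 y) (Ne.symm h)
    rw [div_le_one hw]
    unfold wv
    linarith [hQ0 0 y]

lemma sT_nonneg (hQ0 : ∀ x y, 0 ≤ Q x y) (i : γ × γ × ZMod 2) : 0 ≤ sT Q i := by
  unfold sT
  have := hQ0 i.2.2 i.1; have := hQ0 (i.2.2+1) i.1
  have := hQ0 0 i.2.1; have := hQ0 1 i.2.1
  positivity

lemma qT_nonneg (hQ0 : ∀ x y, 0 ≤ Q x y) (i : γ × γ × ZMod 2) : 0 ≤ qT Q i := by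
  unfold qT
  split
  · exact le_refl 0
  · rename_i h
    have hs : 0 < sT Q i := lt_of_le_of_ne (sT_nonneg Q hQ0 i) (Ne.symm h)
    have := hQ0 (i.2.2+1) i.1; have := hQ0 1 i.2.1
    exact div_nonneg (by positivity) hs.le

lemma qT_le_one (hQ0 : ∀ x y, 0 ≤ Q x y) (i : γ × γ × ZMod 2) : qT Q i ≤ 1 := by
  unfold qT
  split
  · norm_num
  · rename_i h
    have hs : 0 < sT Q i := lt_of_le_of_ne (sT_nonneg Q hQ0 i) (Ne.symm h)
    rw [div_le_one hs]
    unfold sT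
    have h1 := hQ0 i.2.2 i.1; have h2 := hQ0 0 i.2.1
    nlinarith [mul_nonneg h1 h2]

lemma wv_sum_one (hQ1 : ∀ x, ∑ y, Q x y = 1) : ∑ y : γ, wv Q y = 1 := by
  unfold wv
  rw [Finset.sum_add_distrib, ← Finset.mul_sum, ← Finset.mul_sum, hQ1 0, hQ1 1]
  norm_num

lemma HHQ_nonneg (hQ0 : ∀ x y, 0 ≤ Q x y) : 0 ≤ HHQ Q :=
  Finset.sum_nonneg fun y _ => mul_nonneg (wv_nonneg Q hQ0 y)
    (binEnt_nonneg (pv_nonneg Q hQ0 y) (pv_le_one Q hQ0 y))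

lemma HHQ_le_one (hQ0 : ∀ x y, 0 ≤ Q x y) (hQ1 : ∀ x, ∑ y, Q x y = 1) : HHQ Q ≤ 1 := by
  have : HHQ Q ≤ ∑ y : γ, wv Q y := by
    apply Finset.sum_le_sum
    intro y _
    calc wv Q y * binEnt (pv Q y)
        ≤ wv Q y * 1 := mul_le_mul_of_nonneg_left
          (binEnt_le_one (pv_nonneg Q hQ0 y) (pv_le_one Q hQ0 y)) (wv_nonneg Q hQ0 y)
      _ = wv Q y := mul_one _
  rw [wv_sum_one Q hQ1] at this
  exact this

lemma JJ_nonneg (hQ0 : ∀ x y, 0 ≤ Q x y) : 0 ≤ JJ Q := by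
  apply Finset.sum_nonneg
  intro y _
  split
  · exact le_refl 0
  · rename_i h
    have : 0 < Q 0 y + Q 1 y :=
      lt_of_le_of_ne (by linarith [hQ0 0 y, hQ0 1 y]) (Ne.symm h)
    positivity

lemma JJ_eq : JJ Q = ∑ y : γ, 2 * wv Q y * (1 - 2 * pv Q y)^2 := by
  unfold JJ
  apply Finset.sum_congr rfl
  intro y _
  by_cases h : Q 0 y + Q 1 y = 0
  · rw [if_pos h]
    have hw : wv Q y = 0 := by unfold wv; linarith
    rw [hw]; ring
  · rw [if_neg h]
    have hw : wv Q y ≠ 0 := by unfold wv; intro hc; apply h; linarith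
    rw [pv, if_neg hw]
    unfold wv at *
    field_simp
    ring

lemma J_ge (hQ0 : ∀ x y, 0 ≤ Q x y) (hQ1 : ∀ x, ∑ y, Q x y = 1) :
    2 * Real.log 2 * (1 - HHQ Q) ≤ JJ Q := by
  have hs : 1 - HHQ Q = ∑ y : γ, wv Q y * (1 - binEnt (pv Q y)) := by
    have e : ∑ y : γ, wv Q y * (1 - binEnt (pv Q y))
        = (∑ y : γ, wv Q y) - ∑ y : γ, wv Q y * binEnt (pv Q y) := by
      rw [← Finset.sum_sub_distrib]
      apply Finset.sum_congr rfl
      intro y _; ring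
    rw [e, wv_sum_one Q hQ1]
    rfl
  have step : ∑ y : γ, wv Q y * (Real.log 2 * (1 - binEnt (pv Q y)))
      ≤ ∑ y : γ, wv Q y * (1 - 2 * pv Q y)^2 := by
    apply Finset.sum_le_sum
    intro y _
    exact mul_le_mul_of_nonneg_left
      (rev_pinsker (pv_nonneg Q hQ0 y) (pv_le_one Q hQ0 y)) (wv_nonneg Q hQ0 y)
  have e1 : ∑ y : γ, wv Q y * (Real.log 2 * (1 - binEnt (pv Q y)))
      = Real.log 2 * ∑ y : γ, wv Q y * (1 - binEnt (pv Q y)) := by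
    rw [Finset.mul_sum]
    apply Finset.sum_congr rfl
    intro y _; ring
  have e2 : JJ Q = 2 * ∑ y : γ, wv Q y * (1 - 2 * pv Q y)^2 := by
    rw [JJ_eq, Finset.mul_sum]
    apply Finset.sum_congr rfl
    intro y _; ring
  rw [e1, ← hs] at step
  linarith [step]

lemma M_ge (hQ0 : ∀ x y, 0 ≤ Q x y) (hQ1 : ∀ x, ∑ y, Q x y = 1) :
    (Real.log 2)^8 * HHQ Q^8 / 6561 ≤ ∑ y : γ, wv Q y * (pv Q y * (1 - pv Q y))^2 := by
  have per : ∀ y ∈ (Finset.univ : Finset γ),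
      (Real.log 2)^8/6561 * (wv Q y * (binEnt (pv Q y))^8) ≤ wv Q y * (pv Q y * (1 - pv Q y))^2 := by
    intro y _
    have h4 := entsum_pow_four (pv_nonneg Q hQ0 y) (pv_le_one Q hQ0 y)
    have ht : 0 ≤ pv Q y * (1 - pv Q y) := by
      have := pv_nonneg Q hQ0 y; have := pv_le_one Q hQ0 y
      nlinarith
    have hsq : ((Real.log 2 * binEnt (pv Q y))^4)^2 ≤ (81 * (pv Q y * (1-pv Q y)))^2 := by
      apply pow_le_pow_left₀ (by positivity) h4
    have hfin : (Real.log 2)^8/6561 * (binEnt (pv Q y))^8 ≤ (pv Q y * (1 - pv Q y))^2 := by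
      nlinarith [hsq]
    calc (Real.log 2)^8/6561 * (wv Q y * (binEnt (pv Q y))^8)
        = wv Q y * ((Real.log 2)^8/6561 * (binEnt (pv Q y))^8) := by ring
      _ ≤ wv Q y * (pv Q y * (1 - pv Q y))^2 :=
          mul_le_mul_of_nonneg_left hfin (wv_nonneg Q hQ0 y)
  have hsum := Finset.sum_le_sum per
  have e : ∑ y : γ, (Real.log 2)^8/6561 * (wv Q y * (binEnt (pv Q y))^8)
      = (Real.log 2)^8/6561 * ∑ y : γ, wv Q y * (binEnt (pv Q y))^8 := by
    rw [Finset.mul_sum]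
  rw [e] at hsum
  have hecs := ECS8 Finset.univ (wv Q) (fun y => binEnt (pv Q y))
    (fun y _ => wv_nonneg Q hQ0 y) (wv_sum_one Q hQ1)
    (fun y _ => binEnt_nonneg (pv_nonneg Q hQ0 y) (pv_le_one Q hQ0 y))
  have hH8 : HHQ Q^8 ≤ ∑ y : γ, wv Q y * (binEnt (pv Q y))^8 := hecs
  calc (Real.log 2)^8 * HHQ Q^8 / 6561
      = (Real.log 2)^8/6561 * HHQ Q^8 := by ring
    _ ≤ (Real.log 2)^8/6561 * ∑ y : γ, wv Q y * (binEnt (pv Q y))^8 := by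
        apply mul_le_mul_of_nonneg_left hH8 (by positivity)
    _ ≤ ∑ y : γ, wv Q y * (pv Q y * (1 - pv Q y))^2 := hsum

lemma sT_sum (hQ1 : ∀ x, ∑ y, Q x y = 1) (b2 : γ) :
    ∑ j : γ × ZMod 2, sT Q (j.1, b2, j.2) = wv Q b2 := by
  rw [Fintype.sum_prod_type]
  have inner : ∀ b1 : γ, ∑ a1 : ZMod 2, sT Q (b1, b2, a1)
      = (1/4 * Q 0 b2 + 1/4 * Q 1 b2) * (Q 0 b1 + Q 1 b1) := by
    intro b1
    rw [sum_zmod2 (fun a1 => sT Q (b1, b2, a1))]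
    unfold sT
    have e0 : (0 + 1 : ZMod 2) = 1 := by decide
    have e1 : (1 + 1 : ZMod 2) = 0 := by decide
    simp only [e0, e1]
    ring
  rw [Finset.sum_congr rfl (fun b1 _ => inner b1), ← Finset.mul_sum,
    Finset.sum_add_distrib, hQ1 0, hQ1 1]
  unfold wv; ring

lemma sTqT_sum (hQ0 : ∀ x y, 0 ≤ Q x y) (hQ1 : ∀ x, ∑ y, Q x y = 1) (b2 : γ) :
    ∑ j : γ × ZMod 2, sT Q (j.1, b2, j.2) * qT Q (j.1, b2, j.2) = 1/2 * Q 1 b2 := by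
  have hper : ∀ j : γ × ZMod 2, sT Q (j.1, b2, j.2) * qT Q (j.1, b2, j.2)
      = 1/4 * Q (j.2 + 1) j.1 * Q 1 b2 := by
    intro j
    unfold qT
    split
    · rename_i h
      have h1 : 0 ≤ 1/4 * Q j.2 j.1 * Q 0 b2 :=
        mul_nonneg (mul_nonneg (by norm_num) (hQ0 _ _)) (hQ0 _ _)
      have h2 : 0 ≤ 1/4 * Q (j.2+1) j.1 * Q 1 b2 :=
        mul_nonneg (mul_nonneg (by norm_num) (hQ0 _ _)) (hQ0 _ _)
      unfold sT at h
      simp only [] at h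
      rw [mul_zero]
      linarith
    · rename_i h
      rw [mul_div_cancel₀ _ h]
  rw [Finset.sum_congr rfl (fun j _ => hper j), Fintype.sum_prod_type]
  have inner : ∀ b1 : γ, ∑ a1 : ZMod 2, 1/4 * Q (a1 + 1) b1 * Q 1 b2
      = 1/4 * Q 1 b2 * (Q 0 b1 + Q 1 b1) := by
    intro b1
    rw [sum_zmod2 (fun a1 => 1/4 * Q (a1 + 1) b1 * Q 1 b2)]
    have e0 : (0 + 1 : ZMod 2) = 1 := by decide
    have e1 : (1 + 1 : ZMod 2) = 0 := by decide
    rw [e0, e1]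
    ring
  rw [Finset.sum_congr rfl (fun b1 _ => inner b1), ← Finset.mul_sum,
    Finset.sum_add_distrib, hQ1 0, hQ1 1]
  ring

set_option maxHeartbeats 1000000 in
lemma gap_ge (hQ0 : ∀ x y, 0 ≤ Q x y) (hQ1 : ∀ x, ∑ y, Q x y = 1) (b2 : γ) :
    wv Q b2 * (pv Q b2 * (1 - pv Q b2))^2 * JJ Q / Real.log 2
      ≤ wv Q b2 * binEnt (pv Q b2)
        - ∑ j : γ × ZMod 2, sT Q (j.1, b2, j.2) * binEnt (qT Q (j.1, b2, j.2)) := by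
  by_cases hw : wv Q b2 = 0
  · -- degenerate: everything vanishes
    have hq0 : Q 0 b2 = 0 := by
      have := hQ0 0 b2; have := hQ0 1 b2; unfold wv at hw; linarith
    have hq1 : Q 1 b2 = 0 := by
      have := hQ0 0 b2; have := hQ0 1 b2; unfold wv at hw; linarith
    have hz : ∀ j : γ × ZMod 2, sT Q (j.1, b2, j.2) = 0 := by
      intro j; unfold sT; simp only []; rw [hq0, hq1]; ring
    rw [hw]
    have : ∑ j : γ × ZMod 2, sT Q (j.1, b2, j.2) * binEnt (qT Q (j.1, b2, j.2)) = 0 := by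
      apply Finset.sum_eq_zero
      intro j _
      rw [hz j, zero_mul]
    rw [this]
    simp
  · have hwpos : 0 < wv Q b2 := lt_of_le_of_ne (wv_nonneg Q hQ0 b2) (Ne.symm hw)
    have hpv : pv Q b2 = (1/2 * Q 1 b2) / wv Q b2 := by rw [pv, if_neg hw]
    have hc1 : Q 1 b2 = 2 * wv Q b2 * pv Q b2 := by
      rw [hpv]; field_simp
    have hc0 : Q 0 b2 = 2 * wv Q b2 * (1 - pv Q b2) := by
      have hwd : wv Q b2 = 1/2 * Q 0 b2 + 1/2 * Q 1 b2 := rfl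
      nlinarith [hc1, hwd]
    by_cases hp0 : pv Q b2 = 0
    · -- Q 1 b2 = 0, all posteriors are 0
      have hq1 : Q 1 b2 = 0 := by rw [hc1, hp0]; ring
      have hqT : ∀ j : γ × ZMod 2, sT Q (j.1, b2, j.2) * binEnt (qT Q (j.1, b2, j.2)) = 0 := by
        intro j
        unfold qT
        split
        · rename_i h; rw [h, zero_mul]
        · have : (1/4 * Q (j.2 + 1) j.1 * Q 1 b2) = 0 := by rw [hq1]; ring
          rw [this, zero_div, binEnt_zero, mul_zero]
      rw [Finset.sum_congr rfl (fun j _ => hqT j), Finset.sum_const, smul_zero, hp0,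
        binEnt_zero]
      simp
    by_cases hp1 : pv Q b2 = 1
    · -- Q 0 b2 = 0
      have hq0 : Q 0 b2 = 0 := by rw [hc0, hp1]; ring
      have hqT : ∀ j : γ × ZMod 2, sT Q (j.1, b2, j.2) * binEnt (qT Q (j.1, b2, j.2)) = 0 := by
        intro j
        unfold qT
        split
        · rename_i h; rw [h, zero_mul]
        · rename_i h
          have hs : sT Q (j.1, b2, j.2) = 1/4 * Q (j.2 + 1) j.1 * Q 1 b2 := by
            unfold sT; simp only []; rw [hq0]; ring
          rw [hs] at h ⊢
          rw [div_self h, binEnt_one, mul_zero]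
      rw [Finset.sum_congr rfl (fun j _ => hqT j), Finset.sum_const, smul_zero, hp1,
        binEnt_one]
      simp
    · -- main case: 0 < pv < 1
      have hppos : 0 < pv Q b2 := lt_of_le_of_ne (pv_nonneg Q hQ0 b2) (Ne.symm hp0)
      have hplt : pv Q b2 < 1 := lt_of_le_of_ne (pv_le_one Q hQ0 b2) hp1
      set p := pv Q b2 with hpdef
      have hmean : ∑ j : γ × ZMod 2, sT Q (j.1, b2, j.2) * qT Q (j.1, b2, j.2)
          = p * ∑ j : γ × ZMod 2, sT Q (j.1, b2, j.2) := by
        rw [sTqT_sum Q hQ0 hQ1 b2, sT_sum Q hQ1 b2, hc1]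
        ring
      have hjen := jensen_gap Finset.univ (fun j : γ × ZMod 2 => sT Q (j.1, b2, j.2))
        (fun j : γ × ZMod 2 => qT Q (j.1, b2, j.2)) p
        (fun j _ => sT_nonneg Q hQ0 _) (fun j _ => qT_nonneg Q hQ0 _)
        (fun j _ => qT_le_one Q hQ0 _) hppos hplt hmean
      rw [sT_sum Q hQ1 b2] at hjen
      -- now lower-bound the quadratic sum
      have hquad : wv Q b2 * (p * (1 - p))^2 * JJ Q
          ≤ ∑ j : γ × ZMod 2, sT Q (j.1, b2, j.2) * (qT Q (j.1, b2, j.2) - p)^2 := by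
        have hperj : ∀ j : γ × ZMod 2,
            wv Q b2 / 2 * (p * (1 - p))^2 *
              (if Q 0 j.1 + Q 1 j.1 = 0 then 0 else (Q 1 j.1 - Q 0 j.1)^2/(Q 0 j.1 + Q 1 j.1))
            ≤ sT Q (j.1, b2, j.2) * (qT Q (j.1, b2, j.2) - p)^2 := by
          intro j
          set α := Q j.2 j.1 with hαd
          set β := Q (j.2 + 1) j.1 with hβd
          have hα : 0 ≤ α := hQ0 _ _
          have hβ : 0 ≤ β := hQ0 _ _
          have hsT : sT Q (j.1, b2, j.2) = wv Q b2 / 2 * ((1 - p)*α + p*β) := by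
            unfold sT; simp only []
            rw [← hαd, ← hβd, hc0, hc1]
            ring
          have e0 : (0 + 1 : ZMod 2) = 1 := by decide
          have e1 : (1 + 1 : ZMod 2) = 0 := by decide
          have hsum_ab : α + β = Q 0 j.1 + Q 1 j.1 := by
            rcases zmod2_cases j.2 with h | h
            · rw [hαd, hβd, h, e0]
            · rw [hαd, hβd, h, e1]; ring
          have hsq_ab : (β - α)^2 = (Q 1 j.1 - Q 0 j.1)^2 := by
            rcases zmod2_cases j.2 with h | h
            · rw [hαd, hβd, h, e0]
            · rw [hαd, hβd, h, e1]; ring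
          by_cases hD : (1 - p)*α + p*β = 0
          · have hJ0 : Q 0 j.1 + Q 1 j.1 = 0 := by
              have ha0 : α = 0 := by nlinarith
              have hb0 : β = 0 := by nlinarith
              rw [← hsum_ab, ha0, hb0]; ring
            rw [if_pos hJ0, mul_zero]
            exact mul_nonneg (sT_nonneg Q hQ0 _) (sq_nonneg _)
          · have hDpos : 0 < (1 - p)*α + p*β := by
              rcases lt_or_eq_of_le (show (0:ℝ) ≤ (1-p)*α + p*β by nlinarith) with h | h
              · exact h
              · exact absurd h.symm hD
            have habpos : 0 < Q 0 j.1 + Q 1 j.1 := by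
              rw [← hsum_ab]; nlinarith
            rw [if_neg (ne_of_gt habpos)]
            have hsTpos : 0 < sT Q (j.1, b2, j.2) := by
              rw [hsT]; exact mul_pos (by linarith) hDpos
            have hsne : sT Q (j.1, b2, j.2) ≠ 0 := ne_of_gt hsTpos
            have hqTv : qT Q (j.1, b2, j.2) = p * β / ((1 - p)*α + p*β) := by
              rw [qT, if_neg hsne]
              rw [hsT]
              rw [show (1:ℝ)/4 * Q (j.2+1) j.1 * Q 1 b2 = 1/4 * β * (2 * wv Q b2 * p) by
                rw [← hβd, hc1]]
              rw [div_eq_div_iff (by positivity) (ne_of_gt hDpos)]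
              field_simp
              ring
            have hpi := PI_core α β (wv Q b2) p hα hβ hwpos hppos hplt hDpos
            rw [← hsq_ab, ← hsum_ab]
            calc wv Q b2 / 2 * (p * (1 - p))^2 * ((β - α)^2/(α + β))
                ≤ (wv Q b2 / 2 * ((1 - p)*α + p*β)) * (p * β / ((1 - p)*α + p*β) - p)^2 := hpi
              _ = sT Q (j.1, b2, j.2) * (qT Q (j.1, b2, j.2) - p)^2 := by
                  rw [hsT, hqTv]
        have hstep := Finset.sum_le_sum (fun j (_ : j ∈ Finset.univ) => hperj j)
        have e : ∑ j : γ × ZMod 2, wv Q b2 / 2 * (p * (1 - p))^2 *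
              (if Q 0 j.1 + Q 1 j.1 = 0 then 0 else (Q 1 j.1 - Q 0 j.1)^2/(Q 0 j.1 + Q 1 j.1))
            = wv Q b2 * (p * (1 - p))^2 * JJ Q := by
          rw [← Finset.mul_sum]
          have e2 : ∑ j : γ × ZMod 2,
              (if Q 0 j.1 + Q 1 j.1 = 0 then 0 else (Q 1 j.1 - Q 0 j.1)^2/(Q 0 j.1 + Q 1 j.1))
              = 2 * JJ Q := by
            rw [Fintype.sum_prod_type]
            have inner : ∀ b1 : γ, ∑ _a1 : ZMod 2,
                (if Q 0 b1 + Q 1 b1 = 0 then 0 else (Q 1 b1 - Q 0 b1)^2/(Q 0 b1 + Q 1 b1))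
                = 2 * (if Q 0 b1 + Q 1 b1 = 0 then 0 else (Q 1 b1 - Q 0 b1)^2/(Q 0 b1 + Q 1 b1)) := by
              intro b1
              rw [sum_zmod2]
              ring
            rw [Finset.sum_congr rfl (fun b1 _ => inner b1), ← Finset.mul_sum]
            rfl
          rw [e2]
          ring
        rw [e] at hstep
        exact hstep
      have hdiv : wv Q b2 * (p * (1 - p))^2 * JJ Q / Real.log 2
          ≤ (∑ j : γ × ZMod 2, sT Q (j.1, b2, j.2) * (qT Q (j.1, b2, j.2) - p)^2) / Real.log 2 :=
        (div_le_div_iff_of_pos_right log2_pos).mpr hquad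
      linarith [hjen, hdiv]

theorem coreQ (hQ0 : ∀ x y, 0 ≤ Q x y) (hQ1 : ∀ x, ∑ y, Q x y = 1) :
    0 ≤ HHQ Q ∧ HHQ Q ≤ 1 ∧
      2 * (Real.log 2)^8 * ((1 - HHQ Q) * HHQ Q^8) / 6561 ≤ HHQ Q - HPQ Q := by
  refine ⟨HHQ_nonneg Q hQ0, HHQ_le_one Q hQ0 hQ1, ?_⟩
  have regroup : HPQ Q = ∑ b2 : γ, ∑ j : γ × ZMod 2,
      sT Q (j.1, b2, j.2) * binEnt (qT Q (j.1, b2, j.2)) := by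
    unfold HPQ
    rw [Fintype.sum_prod_type]
    simp_rw [Fintype.sum_prod_type]
    exact Finset.sum_comm
  have hdiff : HHQ Q - HPQ Q = ∑ b2 : γ, (wv Q b2 * binEnt (pv Q b2)
      - ∑ j : γ × ZMod 2, sT Q (j.1, b2, j.2) * binEnt (qT Q (j.1, b2, j.2))) := by
    rw [regroup]
    unfold HHQ
    rw [← Finset.sum_sub_distrib]
  have hstep := Finset.sum_le_sum (fun b2 (_ : b2 ∈ Finset.univ) => gap_ge Q hQ0 hQ1 b2)
  rw [← hdiff] at hstep
  have e : ∑ b2 : γ, wv Q b2 * (pv Q b2 * (1 - pv Q b2))^2 * JJ Q / Real.log 2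
      = (JJ Q / Real.log 2) * ∑ b2 : γ, wv Q b2 * (pv Q b2 * (1 - pv Q b2))^2 := by
    rw [Finset.mul_sum]
    apply Finset.sum_congr rfl
    intro b2 _
    ring
  rw [e] at hstep
  have hJ := J_ge Q hQ0 hQ1
  have hM := M_ge Q hQ0 hQ1
  have hH0 := HHQ_nonneg Q hQ0
  have hH1 := HHQ_le_one Q hQ0 hQ1
  have hJl0 : 0 ≤ 2 * Real.log 2 * (1 - HHQ Q) := by
    have := log2_pos; nlinarith
  have hMl0 : 0 ≤ (Real.log 2)^8 * HHQ Q^8 / 6561 := by positivity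
  have hprod : (2 * Real.log 2 * (1 - HHQ Q)) * ((Real.log 2)^8 * HHQ Q^8 / 6561)
      ≤ JJ Q * ∑ b2 : γ, wv Q b2 * (pv Q b2 * (1 - pv Q b2))^2 :=
    mul_le_mul hJ hM hMl0 (JJ_nonneg Q hQ0)
  have hlog := log2_pos
  have efin : 2 * (Real.log 2)^8 * ((1 - HHQ Q) * HHQ Q^8) / 6561
      = (2 * Real.log 2 * (1 - HHQ Q)) * ((Real.log 2)^8 * HHQ Q^8 / 6561) / Real.log 2 := by
    field_simp
  rw [efin]
  calc (2 * Real.log 2 * (1 - HHQ Q)) * ((Real.log 2)^8 * HHQ Q^8 / 6561) / Real.log 2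
      ≤ (JJ Q * ∑ b2 : γ, wv Q b2 * (pv Q b2 * (1 - pv Q b2))^2) / Real.log 2 :=
        (div_le_div_iff_of_pos_right hlog).mpr hprod
    _ = (JJ Q / Real.log 2) * ∑ b2 : γ, wv Q b2 * (pv Q b2 * (1 - pv Q b2))^2 := by
        ring
    _ ≤ HHQ Q - HPQ Q := hstep


end S16

open S16

/-- Arıkan's extremality lemma: if
`P(A₁=a₁, A₂=a₂, B₁=b₁, B₂=b₂) = (1/4) Q(b₁ | a₁+a₂) Q(b₂ | a₂)` for a conditional
probability kernel `Q`, then for every `a > 0` there is `b > 0` (uniform over `Q` and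
the underlying spaces) such that `H(A₂|B₂) − H(A₂ | B₁, B₂, A₁) ≤ b` implies
`H(A₂|B₂) ∈ [0, a] ∪ [1−a, 1]`. -/
theorem statement16 (a : ℝ) (ha : 0 < a) :
    ∃ b : ℝ, 0 < b ∧
      ∀ (γ : Type) (_ : Fintype γ) (Ω : Type) (_ : MeasurableSpace Ω)
        (μ : Measure Ω), IsProbabilityMeasure μ →
      ∀ Q : ZMod 2 → γ → ℝ, (∀ x y, 0 ≤ Q x y) → (∀ x, ∑ y : γ, Q x y = 1) →
      ∀ (A1 A2 : Ω → ZMod 2) (B1 B2 : Ω → γ),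
        (∀ (a1 a2 : ZMod 2) (b1 b2 : γ),
          (μ {ω | A1 ω = a1 ∧ A2 ω = a2 ∧ B1 ω = b1 ∧ B2 ω = b2}).toReal
            = 1 / 4 * Q (a1 + a2) b1 * Q a2 b2) →
        cEnt μ A2 B2 - cEnt μ A2 (fun ω => (B1 ω, B2 ω, A1 ω)) ≤ b →
        cEnt μ A2 B2 ∈ Set.Icc 0 a ∪ Set.Icc (1 - a) 1 := by
  have hmin : 0 < min a (1/2) := lt_min ha (by norm_num)
  refine ⟨2 * (Real.log 2)^8 * (min a (1/2))^9 / 6561, by positivity, ?_⟩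
  intro γ instγ Ω instΩ μ instμ Q hQ0 hQ1 A1 A2 B1 B2 hP hdiff
  set Φ : Ω → ZMod 2 × ZMod 2 × γ × γ := fun ω => (A1 ω, A2 ω, B1 ω, B2 ω) with hΦ
  set r : ZMod 2 × ZMod 2 × γ × γ → ℝ :=
    fun i => 1/4 * Q (i.1 + i.2.1) i.2.2.1 * Q i.2.1 i.2.2.2 with hr
  have hr0 : ∀ i, 0 ≤ r i := by
    intro i
    have h1 := hQ0 (i.1 + i.2.1) i.2.2.1
    have h2 := hQ0 i.2.1 i.2.2.2
    simp only [hr]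
    positivity
  have sumQ : ∀ (c : ZMod 2) (K : ℝ), ∑ b1 : γ, K * Q c b1 = K := by
    intro c K; rw [← Finset.mul_sum, hQ1 c, mul_one]
  have hatom : ∀ i, (μ (Φ ⁻¹' {i})).toReal = r i := by
    rintro ⟨a1, a2, b1, b2⟩
    have hset : Φ ⁻¹' {(a1,a2,b1,b2)}
        = {ω | A1 ω = a1 ∧ A2 ω = a2 ∧ B1 ω = b1 ∧ B2 ω = b2} := by
      ext ω
      simp [hΦ, Prod.ext_iff, and_assoc]
    rw [hset, hP a1 a2 b1 b2]
  have hrsum : ∑ i, r i = 1 := by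
    rw [Fintype.sum_prod_type, sum_zmod2]
    have h2 : ∀ a1 : ZMod 2, ∑ p : ZMod 2 × γ × γ, r (a1, p) = 1/2 := by
      intro a1
      rw [Fintype.sum_prod_type, sum_zmod2]
      have h3 : ∀ a2 : ZMod 2, ∑ b : γ × γ, r (a1, a2, b) = 1/4 := by
        intro a2
        rw [Fintype.sum_prod_type]
        have inner : ∀ b1 : γ, ∑ b2 : γ, r (a1, a2, b1, b2) = 1/4 * Q (a1+a2) b1 := by
          intro b1
          have e : ∀ b2 : γ, r (a1,a2,b1,b2) = (1/4 * Q (a1+a2) b1) * Q a2 b2 := by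
            intro b2; simp only [hr]; try ring
          rw [Finset.sum_congr rfl (fun b2 _ => e b2), ← Finset.mul_sum, hQ1, mul_one]
        rw [Finset.sum_congr rfl (fun b1 _ => inner b1), sumQ]
      rw [h3 0, h3 1]
      all_goals norm_num
    rw [h2 0, h2 1]
    all_goals norm_num
  have master := measure_pre μ Φ r hr0 hrsum hatom
  -- marginals
  have hjoint2 : ∀ (x : ZMod 2) (y : γ),
      (μ ((fun ω => (A2 ω, B2 ω)) ⁻¹' {(x,y)})).toReal = 1/2 * Q x y := by
    intro x y
    have hset : (fun ω => (A2 ω, B2 ω)) ⁻¹' {(x,y)} =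
        Φ ⁻¹' ↑((Finset.univ : Finset (ZMod 2 × γ)).image (fun j => (j.1, x, j.2, y))) := by
      rw [Finset.coe_image, Finset.coe_univ, Set.image_univ]
      ext ω
      simp only [Set.mem_preimage, Set.mem_singleton_iff, Set.mem_range]
      constructor
      · intro h
        have hx : A2 ω = x := congrArg Prod.fst h
        have hy : B2 ω = y := congrArg Prod.snd h
        refine ⟨(A1 ω, B1 ω), ?_⟩
        simp only [hΦ]
        rw [← hx, ← hy]
      · rintro ⟨j, hj⟩
        have hx : x = A2 ω := congrArg (fun t : ZMod 2 × ZMod 2 × γ × γ => t.2.1) hj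
        have hy : y = B2 ω := congrArg (fun t : ZMod 2 × ZMod 2 × γ × γ => t.2.2.2) hj
        rw [Prod.mk.injEq]
        exact ⟨hx.symm, hy.symm⟩
    rw [hset, master]
    rw [Finset.sum_image (by
      intro j _ j' _ h
      have h1 : j.1 = j'.1 := congrArg (fun t : ZMod 2 × ZMod 2 × γ × γ => t.1) h
      have h2 : j.2 = j'.2 := congrArg (fun t : ZMod 2 × ZMod 2 × γ × γ => t.2.2.1) h
      exact Prod.ext h1 h2)]
    -- ∑ j : ZMod 2 × γ, r (j.1, x, j.2, y) = 1/2 * Q x y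
    rw [Fintype.sum_prod_type, sum_zmod2]
    have inner : ∀ a1 : ZMod 2, ∑ b1 : γ, r (a1, x, b1, y) = 1/4 * Q x y := by
      intro a1
      have e : ∀ b1 : γ, r (a1, x, b1, y) = (1/4 * Q x y) * Q (a1 + x) b1 := by
        intro b1; simp only [hr]; try ring
      rw [Finset.sum_congr rfl (fun b1 _ => e b1), ← Finset.mul_sum, hQ1, mul_one]
    rw [inner 0, inner 1]
    ring
  have hmarg2 : ∀ y : γ, (μ (B2 ⁻¹' {y})).toReal = 1/2 * Q 0 y + 1/2 * Q 1 y := by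
    intro y
    have hset : B2 ⁻¹' {y} =
        Φ ⁻¹' ↑((Finset.univ : Finset (ZMod 2 × ZMod 2 × γ)).image
          (fun j => (j.1, j.2.1, j.2.2, y))) := by
      rw [Finset.coe_image, Finset.coe_univ, Set.image_univ]
      ext ω
      simp only [Set.mem_preimage, Set.mem_singleton_iff, Set.mem_range]
      constructor
      · intro h
        refine ⟨(A1 ω, A2 ω, B1 ω), ?_⟩
        simp only [hΦ]
        rw [← h]
      · rintro ⟨j, hj⟩
        exact (congrArg (fun t : ZMod 2 × ZMod 2 × γ × γ => t.2.2.2) hj).symm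
    rw [hset, master]
    rw [Finset.sum_image (by
      intro j _ j' _ h
      have h1 : j.1 = j'.1 := congrArg (fun t : ZMod 2 × ZMod 2 × γ × γ => t.1) h
      have h2 : j.2.1 = j'.2.1 := congrArg (fun t : ZMod 2 × ZMod 2 × γ × γ => t.2.1) h
      have h3 : j.2.2 = j'.2.2 := congrArg (fun t : ZMod 2 × ZMod 2 × γ × γ => t.2.2.1) h
      exact Prod.ext h1 (Prod.ext h2 h3))]
    rw [Fintype.sum_prod_type, sum_zmod2]
    have inner : ∀ a1 : ZMod 2, ∑ p : ZMod 2 × γ, r (a1, p.1, p.2, y)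
        = 1/4 * Q 0 y + 1/4 * Q 1 y := by
      intro a1
      rw [Fintype.sum_prod_type, sum_zmod2]
      have inner2 : ∀ a2 : ZMod 2, ∑ b1 : γ, r (a1, a2, b1, y) = 1/4 * Q a2 y := by
        intro a2
        have e : ∀ b1 : γ, r (a1, a2, b1, y) = (1/4 * Q a2 y) * Q (a1 + a2) b1 := by
          intro b1; simp only [hr]; try ring
        rw [Finset.sum_congr rfl (fun b1 _ => e b1), ← Finset.mul_sum, hQ1, mul_one]
      rw [inner2 0, inner2 1]
    rw [inner 0, inner 1]
    ring
  have hH : cEnt μ A2 B2 = HHQ Q := by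
    rw [cEnt_formula μ A2 B2 (fun x y => 1/2 * Q x y)
      (fun x y => by have := hQ0 x y; positivity)
      (fun x y => hjoint2 x y) (fun y => hmarg2 y)]
    rfl
  -- triple
  have hjointT : ∀ (x : ZMod 2) (i : γ × γ × ZMod 2),
      (μ ((fun ω => (A2 ω, (B1 ω, B2 ω, A1 ω))) ⁻¹' {(x,i)})).toReal
        = 1/4 * Q (i.2.2 + x) i.1 * Q x i.2.1 := by
    intro x i
    have hset : (fun ω => (A2 ω, (B1 ω, B2 ω, A1 ω))) ⁻¹' {(x,i)}
        = {ω | A1 ω = i.2.2 ∧ A2 ω = x ∧ B1 ω = i.1 ∧ B2 ω = i.2.1} := by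
      ext ω
      simp only [Set.mem_preimage, Set.mem_singleton_iff, Prod.mk.injEq, Set.mem_setOf_eq]
      constructor
      · rintro ⟨h1, h2⟩
        have e1 : B1 ω = i.1 := congrArg (fun t : γ × γ × ZMod 2 => t.1) h2
        have e2 : B2 ω = i.2.1 := congrArg (fun t : γ × γ × ZMod 2 => t.2.1) h2
        have e3 : A1 ω = i.2.2 := congrArg (fun t : γ × γ × ZMod 2 => t.2.2) h2
        exact ⟨e3, h1, e1, e2⟩
      · rintro ⟨h1, h2, h3, h4⟩
        refine ⟨h2, ?_⟩
        rw [Prod.mk.injEq, Prod.mk.injEq]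
        exact ⟨h3, h4, h1⟩
    rw [hset, hP i.2.2 x i.1 i.2.1]
  have hmargT : ∀ i : γ × γ × ZMod 2,
      (μ ((fun ω => (B1 ω, B2 ω, A1 ω)) ⁻¹' {i})).toReal
        = 1/4 * Q (i.2.2 + 0) i.1 * Q 0 i.2.1 + 1/4 * Q (i.2.2 + 1) i.1 * Q 1 i.2.1 := by
    intro i
    have hset : (fun ω => (B1 ω, B2 ω, A1 ω)) ⁻¹' {i}
        = Φ ⁻¹' ↑((Finset.univ : Finset (ZMod 2)).image
          (fun a2 => (i.2.2, a2, i.1, i.2.1))) := by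
      rw [Finset.coe_image, Finset.coe_univ, Set.image_univ]
      ext ω
      simp only [Set.mem_preimage, Set.mem_singleton_iff, Set.mem_range]
      constructor
      · intro h
        have e1 : B1 ω = i.1 := congrArg (fun t : γ × γ × ZMod 2 => t.1) h
        have e2 : B2 ω = i.2.1 := congrArg (fun t : γ × γ × ZMod 2 => t.2.1) h
        have e3 : A1 ω = i.2.2 := congrArg (fun t : γ × γ × ZMod 2 => t.2.2) h
        refine ⟨A2 ω, ?_⟩
        simp only [hΦ]
        rw [← e1, ← e2, ← e3]
      · rintro ⟨a2, hj⟩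
        have e1 : i.1 = B1 ω := congrArg (fun t : ZMod 2 × ZMod 2 × γ × γ => t.2.2.1) hj
        have e2 : i.2.1 = B2 ω := congrArg (fun t : ZMod 2 × ZMod 2 × γ × γ => t.2.2.2) hj
        have e3 : i.2.2 = A1 ω := congrArg (fun t : ZMod 2 × ZMod 2 × γ × γ => t.1) hj
        rw [Prod.mk.injEq, Prod.mk.injEq]
        exact ⟨e1.symm, e2.symm, e3.symm⟩
    rw [hset, master]
    rw [Finset.sum_image (by
      intro j _ j' _ h
      exact congrArg (fun t : ZMod 2 × ZMod 2 × γ × γ => t.2.1) h)]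
    rw [sum_zmod2 (fun a2 => r (i.2.2, a2, i.1, i.2.1))]
    try simp only [hr]
  have hHP : cEnt μ A2 (fun ω => (B1 ω, B2 ω, A1 ω)) = HPQ Q := by
    rw [cEnt_formula μ A2 (fun ω => (B1 ω, B2 ω, A1 ω))
      (fun x i => 1/4 * Q (i.2.2 + x) i.1 * Q x i.2.1)
      (fun x i => by
        have h1 := hQ0 (i.2.2 + x) i.1; have h2 := hQ0 x i.2.1; positivity)
      (fun x i => hjointT x i) (fun i => hmargT i)]
    unfold HPQ
    apply Finset.sum_congr rfl
    intro i _
    have e0 : (i.2.2 + 0 : ZMod 2) = i.2.2 := add_zero _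
    rw [e0]
    rfl
  -- conclude
  obtain ⟨hH0, hH1, hcore⟩ := coreQ Q hQ0 hQ1
  rw [hH, hHP] at hdiff
  rw [hH]
  by_contra hcon
  rw [Set.mem_union, Set.mem_Icc, Set.mem_Icc] at hcon
  push_neg at hcon
  obtain ⟨hc1, hc2⟩ := hcon
  have hlt1 : a < HHQ Q := hc1 hH0
  have hlt2 : HHQ Q < 1 - a := by
    by_contra h
    push_neg at h
    exact absurd hH1 (by have := hc2 h; linarith)
  have ha2 : a ≤ 1/2 := by linarith
  have hamin : min a (1/2) = a := min_eq_left ha2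
  rw [hamin] at hdiff
  have hstrict : a^9 < (1 - HHQ Q) * HHQ Q^8 := by
    have h8 : a^8 < HHQ Q^8 := by
      apply pow_lt_pow_left₀ hlt1 ha.le
      norm_num
    nlinarith [pow_pos ha 8]
  have c8 : (0:ℝ) < (Real.log 2)^8 := pow_pos log2_pos 8
  nlinarith [hcore, hdiff, hstrict, c8]
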